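/- Let E be a real normed vector space, let A : E →L[ℝ] E be a continuous linear operator such that the series Σ_{i=0}^∞ ‖A^i‖ of operator norms of its powers converges with sum S, and let (z_n), (e_n) be sequences in E satisfying z_{n+1} = A z_n + e_{n+1} for all n ≥ 0, with ‖e_k‖ ≤ c for all k ≥ 1 and some c ≥ 0. Then the global prediction error is globally bounded: for every n ≥ 1, ‖z_n − A^n z_0‖ ≤ c · S. -/
import Mathlib


/-- Theorem 1 of the paper: If the operator norms of the powers of `A`
are summable with sum `S` and the local errors are uniformly bounded by `c`, then the
global prediction error is globally bounded by `c * S`. -/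
theorem global_prediction_error_bound_of_stable
    {E : Type*} [NormedAddCommGroup E] [NormedSpace ℝ E]
    (A : E →L[ℝ] E) (S : ℝ) (hS : HasSum (fun i : ℕ => ‖A ^ i‖) S)
    (z e : ℕ → E)
    (hrec : ∀ n : ℕ, z (n + 1) = A (z n) + e (n + 1))
    (c : ℝ) (hc : 0 ≤ c) (he : ∀ k : ℕ, 1 ≤ k → ‖e k‖ ≤ c) :
    ∀ n : ℕ, 1 ≤ n → ‖z n - (A ^ n) (z 0)‖ ≤ c * S := by
  have key : ∀ n : ℕ, z n - (A ^ n) (z 0) =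
      ∑ i ∈ Finset.range n, (A ^ i) (e (n - i)) := by
    intro n
    induction n with
    | zero => simp
    | succ n ih =>
      rw [Finset.sum_range_succ']
      have : ∀ i ∈ Finset.range n, (A ^ (i + 1)) (e (n + 1 - (i + 1)))
          = A ((A ^ i) (e (n - i))) := by
        intro i hi
        rw [pow_succ']
        simp
      rw [Finset.sum_congr rfl this, ← map_sum, ← ih]
      rw [hrec n, pow_succ']
      simp
      abel
  intro n hn
  rw [key n]
  calc ‖∑ i ∈ Finset.range n, (A ^ i) (e (n - i))‖
      ≤ ∑ i ∈ Finset.range n, ‖(A ^ i) (e (n - i))‖ := norm_sum_le _ _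
    _ ≤ ∑ i ∈ Finset.range n, ‖A ^ i‖ * c := by
        apply Finset.sum_le_sum
        intro i hi
        calc ‖(A ^ i) (e (n - i))‖ ≤ ‖A ^ i‖ * ‖e (n - i)‖ :=
              (A ^ i).le_opNorm _
          _ ≤ ‖A ^ i‖ * c := by
              apply mul_le_mul_of_nonneg_left _ (norm_nonneg _)
              have := Finset.mem_range.mp hi
              exact he _ (by omega)
    _ = (∑ i ∈ Finset.range n, ‖A ^ i‖) * c := by rw [← Finset.sum_mul]
    _ ≤ S * c := by
        apply mul_le_mul_of_nonneg_right _ hc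
        exact sum_le_hasSum _ (fun i _ => norm_nonneg _) hS
    _ = c * S := mul_comm _ _
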